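/- arXiv:2211.13609 — 2 statements merged into one kernel-verified Lean document; each statement's English description precedes it below -/
import Mathlib

section
/- McAllester PAC-Bayes bound: Let P be a prior probability measure on a hypothesis space H, ℓ the 0-1 loss, and 𝒟 a distribution on labeled examples. For any δ ∈ (0,1) and any n ≥ 1, with probability at least 1−δ over an i.i.d. sample of size n from 𝒟, simultaneously for every posterior probability measure Q on H: E_{h∼Q}[R(h)] ≤ E_{h∼Q}[R̂(h)] + sqrt((KL(Q‖P) + log(n/δ) + 2) / (2n − 1)). -/
open MeasureTheory Real
open scoped Classical

/-- The Kullback–Leibler divergence `KL(μ ‖ ν)` between two measures, as an extended real: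
it is `∫ log (dμ/dν) dμ` when `μ ≪ ν` and the integrand is integrable, and `+∞` otherwise. -/
noncomputable def klDiv {α : Type*} [MeasurableSpace α] (μ ν : Measure α) : EReal :=
  if μ ≪ ν ∧ Integrable (fun x => Real.log (μ.rnDeriv ν x).toReal) μ then
    ((∫ x, Real.log (μ.rnDeriv ν x).toReal ∂μ : ℝ) : EReal)
  else ⊤


open scoped ENNReal


lemma bern_mgf_le {p : ℝ} (hp0 : 0 ≤ p) (hp1 : p ≤ 1) (t : ℝ) :
    1 - p + p * exp t ≤ exp (p * t + t ^ 2 / 8) := by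
  have hD : ∀ x : ℝ, 0 < 1 - p + p * exp x := by
    intro x
    rcases eq_or_lt_of_le hp0 with h | h
    · simp [← h]
    · have := mul_pos h (exp_pos x); linarith
  set θ : ℝ → ℝ := fun x => p * x + x ^ 2 / 8 - Real.log (1 - p + p * exp x) with hθ
  set θ' : ℝ → ℝ := fun x => p + x / 4 - p * exp x / (1 - p + p * exp x) with hθ'
  have hDd : ∀ x : ℝ, HasDerivAt (fun y => 1 - p + p * exp y) (p * exp x) x := fun x =>
    ((Real.hasDerivAt_exp x).const_mul p).const_add (1 - p)
  have hθd : ∀ x : ℝ, HasDerivAt θ (θ' x) x := by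
    intro x
    have h1 : HasDerivAt (fun y : ℝ => p * y + y ^ 2 / 8) (p + 2 * x / 8) x := by
      have := ((hasDerivAt_id x).const_mul p).add
        (((hasDerivAt_pow 2 x)).div_const 8)
      simp at this; exact this
    have h2 : HasDerivAt (fun y => Real.log (1 - p + p * exp y))
        (p * exp x / (1 - p + p * exp x)) x := by
      have := (Real.hasDerivAt_log (hD x).ne').comp x (hDd x)
      rw [div_eq_inv_mul]; exact this
    have : HasDerivAt (fun y => (p * y + y ^ 2 / 8) - Real.log (1 - p + p * exp y)) _ x := h1.sub h2
    convert this using 1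
    simp [hθ']; ring
  have hθ'd : ∀ x : ℝ, HasDerivAt θ'
      (1/4 - p * exp x * (1 - p) / (1 - p + p * exp x) ^ 2) x := by
    intro x
    have h1 : HasDerivAt (fun y : ℝ => p + y / 4) (1/4) x := by
      simpa using ((hasDerivAt_id x).div_const 4).const_add p
    have h2 : HasDerivAt (fun y => p * exp y / (1 - p + p * exp y))
        ((p * exp x * (1 - p + p * exp x) - p * exp x * (p * exp x)) /
          (1 - p + p * exp x) ^ 2) x :=
      ((Real.hasDerivAt_exp x).const_mul p).div (hDd x) (hD x).ne'
    have : HasDerivAt (fun y => (p + y / 4) - p * exp y / (1 - p + p * exp y)) _ x := h1.sub h2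
    convert this using 1
    have h3 := (hD x).ne'
    field_simp
    ring
  have hθ'nonneg : ∀ x : ℝ, 0 ≤ 1/4 - p * exp x * (1 - p) / (1 - p + p * exp x) ^ 2 := by
    intro x
    rw [sub_nonneg, div_le_iff₀ (pow_pos (hD x) 2)]
    nlinarith [sq_nonneg (1 - p - p * exp x), exp_pos x, mul_nonneg hp0 (exp_pos x).le]
  have hmono : Monotone θ' := by
    apply monotone_of_deriv_nonneg (fun x => (hθ'd x).differentiableAt)
    intro x; rw [(hθ'd x).deriv]; exact hθ'nonneg x
  have hθ'0 : θ' 0 = 0 := by simp [hθ']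
  have hθdiff : Differentiable ℝ θ := fun x => (hθd x).differentiableAt
  have hθ0 : θ 0 = 0 := by simp [hθ]
  have key : 0 ≤ θ t := by
    rcases le_or_gt 0 t with hx | hx
    · have : θ 0 ≤ θ t := by
        refine monotoneOn_of_deriv_nonneg (convex_Ici 0) hθdiff.continuous.continuousOn
          hθdiff.differentiableOn (fun x hxm => ?_) Set.self_mem_Ici hx hx
        rw [(hθd x).deriv]
        rw [interior_Ici] at hxm
        rw [← hθ'0]
        exact hmono (le_of_lt hxm)
      linarith
    · have : θ t ≥ θ 0 := by
        refine antitoneOn_of_deriv_nonpos (convex_Iic 0) hθdiff.continuous.continuousOn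
          hθdiff.differentiableOn (fun x hxm => ?_) (le_of_lt hx) Set.self_mem_Iic (le_of_lt hx)
        rw [(hθd x).deriv]
        rw [interior_Iic] at hxm
        rw [← hθ'0]
        exact hmono (le_of_lt hxm)
      linarith
  have h2 : Real.log (1 - p + p * exp t) ≤ p * t + t ^ 2 / 8 := by
    simp only [hθ, sub_nonneg] at key
    exact key
  calc 1 - p + p * exp t = exp (Real.log (1 - p + p * exp t)) := (exp_log (hD t)).symm
  _ ≤ _ := exp_le_exp.2 h2


lemma chernoff_point {Z : Type*} [MeasurableSpace Z] (𝒟 : Measure Z) [IsProbabilityMeasure 𝒟]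
    {X : Z → ℝ} (hX : Measurable X) (h01 : ∀ z, X z = 0 ∨ X z = 1)
    (n : ℕ) (hn : 1 ≤ n) (k : ℕ) :
    (Measure.pi fun _ : Fin n => 𝒟) {s | ∑ i, X (s i) = (k : ℝ)} ≤
      ENNReal.ofReal (Real.exp (-2 * n * ((k : ℝ) / n - ∫ z, X z ∂𝒟) ^ 2)) := by
  letI : MeasureSpace Z := ⟨𝒟⟩
  haveI : IsProbabilityMeasure (volume : Measure Z) := ‹IsProbabilityMeasure 𝒟›
  have hX01 : ∀ z, 0 ≤ X z ∧ X z ≤ 1 := by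
    intro z; rcases h01 z with h | h <;> simp [h]
  have hXint : Integrable X 𝒟 :=
    (integrable_const (1 : ℝ)).mono' hX.aestronglyMeasurable
      (Filter.Eventually.of_forall fun z => by
        rw [Real.norm_eq_abs, abs_le]; constructor <;> linarith [(hX01 z).1, (hX01 z).2])
  set p : ℝ := ∫ z, X z ∂𝒟 with hp
  have hp0 : 0 ≤ p := integral_nonneg fun z => (hX01 z).1
  have hp1 : p ≤ 1 := by
    calc p ≤ ∫ _ : Z, (1 : ℝ) ∂𝒟 := integral_mono hXint (integrable_const 1) fun z => (hX01 z).2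
    _ = 1 := by simp
  have hn0 : (0 : ℝ) < n := by exact_mod_cast hn
  set q : ℝ := (k : ℝ) / n with hq
  set L : ℝ := 4 * (q - p) with hL
  set W : (Fin n → Z) → ℝ := fun s => ∏ i, exp (L * X (s i)) with hW
  have hWpos : ∀ s, 0 < W s := fun s => Finset.prod_pos fun i _ => exp_pos _
  have hfac_int : Integrable (fun z => exp (L * X z)) 𝒟 :=
    (integrable_const (exp |L|)).mono' (hX.const_mul L).exp.aestronglyMeasurable
      (Filter.Eventually.of_forall fun z => by
        rw [Real.norm_eq_abs, abs_of_pos (exp_pos _)]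
        apply exp_le_exp.2
        rcases h01 z with h | h <;> simp [h, le_abs_self, abs_nonneg, neg_abs_le])
  have hWint : Integrable W (Measure.pi fun _ : Fin n => 𝒟) := by
    rw [show (Measure.pi fun _ : Fin n => 𝒟) = (volume : Measure (Fin n → Z)) from
      (volume_pi).symm]
    exact Integrable.fintype_prod (f := fun _ : Fin n => fun z => exp (L * X z)) fun i => hfac_int
  have hWmeas : {x : Fin n → Z | exp (L * k) ≤ W x} ∈ {x | True} := trivial
  have hsub : {s : Fin n → Z | ∑ i, X (s i) = (k : ℝ)} ⊆ {s | exp (L * k) ≤ W s} := by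
    intro s hs
    simp only [Set.mem_setOf_eq] at hs ⊢
    have : W s = exp (L * (k : ℝ)) := by
      simp only [hW, ← Real.exp_sum, ← Finset.mul_sum, hs]
    rw [this]
  have hmarkov := mul_meas_ge_le_integral_of_nonneg
    (μ := Measure.pi fun _ : Fin n => 𝒟)
    (Filter.Eventually.of_forall fun s => (hWpos s).le) hWint (exp (L * k))
  have hintW : ∫ s, W s ∂(Measure.pi fun _ : Fin n => 𝒟) = (1 - p + p * exp L) ^ n := by
    rw [show (Measure.pi fun _ : Fin n => 𝒟) = (volume : Measure (Fin n → Z)) from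
      (volume_pi).symm]
    rw [hW, MeasureTheory.integral_fintype_prod_volume_eq_pow (ι := Fin n) (fun z => exp (L * X z))]
    rw [show (volume : Measure Z) = 𝒟 from rfl]
    have : ∫ z, exp (L * X z) ∂𝒟 = 1 - p + p * exp L := by
      have heq : (fun z => exp (L * X z)) = fun z => 1 + (exp L - 1) * X z := by
        funext z; rcases h01 z with h | h <;> simp [h] <;> ring
      rw [heq, integral_add (integrable_const 1) (hXint.const_mul _),
        MeasureTheory.integral_const_mul, integral_const, ← hp]
      simp
      ring
    rw [this, Fintype.card_fin]
  -- combine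
  have hbound : ((Measure.pi fun _ : Fin n => 𝒟) {s | ∑ i, X (s i) = (k : ℝ)}).toReal ≤
      Real.exp (-2 * n * (q - p) ^ 2) := by
    have hmono := measure_mono (μ := Measure.pi fun _ : Fin n => 𝒟) hsub
    have h1 : ((Measure.pi fun _ : Fin n => 𝒟) {s | ∑ i, X (s i) = (k : ℝ)}).toReal ≤
        ((Measure.pi fun _ : Fin n => 𝒟) {s | exp (L * k) ≤ W s}).toReal := by
      apply ENNReal.toReal_mono (measure_ne_top _ _) hmono
    refine h1.trans ?_
    have hek : (0:ℝ) < exp (L * k) := exp_pos _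
    rw [← le_div_iff₀' hek] at hmarkov
    refine hmarkov.trans ?_
    rw [div_le_iff₀' hek, hintW]
    have hstep : (1 - p + p * exp L) ^ n ≤ exp (n * (p * L + L ^ 2 / 8)) := by
      have h1 := bern_mgf_le hp0 hp1 L
      calc (1 - p + p * exp L) ^ n ≤ (exp (p * L + L ^ 2 / 8)) ^ n := by
            apply pow_le_pow_left₀ _ h1
            have := exp_pos L
            nlinarith [mul_nonneg hp0 (exp_pos L).le]
      _ = exp (n * (p * L + L ^ 2 / 8)) := by rw [← Real.exp_nat_mul]
    refine hstep.trans ?_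
    rw [← Real.exp_add]
    apply exp_le_exp.2
    have hk : (k : ℝ) = n * q := by rw [hq]; field_simp
    rw [hk, hL]
    ring_nf
    nlinarith [sq_nonneg (q - p)]
  have hr : 0 ≤ Real.exp (-2 * n * (q - p) ^ 2) := (exp_pos _).le
  rw [ENNReal.le_ofReal_iff_toReal_le (measure_ne_top _ _) hr]
  exact hbound


lemma stepA {Z : Type*} [MeasurableSpace Z] (𝒟 : Measure Z) [IsProbabilityMeasure 𝒟]
    {X : Z → ℝ} (hX : Measurable X) (h01 : ∀ z, X z = 0 ∨ X z = 1)
    (n : ℕ) (hn : 1 ≤ n) :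
    ∫ s, exp ((2 * n - 1) * ((∫ z, X z ∂𝒟) - (1 / n) * ∑ i, X (s i)) ^ 2)
      ∂(Measure.pi fun _ : Fin n => 𝒟) ≤ exp 2 * n := by
  set μ : Measure (Fin n → Z) := Measure.pi fun _ : Fin n => 𝒟 with hμ
  haveI : IsProbabilityMeasure μ := by rw [hμ]; infer_instance
  set p : ℝ := ∫ z, X z ∂𝒟 with hp
  have hn0 : (0 : ℝ) < n := by exact_mod_cast hn
  set T : (Fin n → Z) → ℝ := fun s => ∑ i, X (s i) with hT
  have hTmeas : Measurable T := Finset.measurable_sum _ fun i _ => hX.comp (measurable_pi_apply i)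
  have hTk : ∀ s, ∃ k : ℕ, k ≤ n ∧ T s = (k : ℝ) := by
    intro s
    refine ⟨(Finset.univ.filter fun i => X (s i) = 1).card, ?_, ?_⟩
    · exact (Finset.card_filter_le _ _).trans (by simp)
    · rw [hT]
      simp only
      rw [← Finset.sum_boole]
      congr 1
      funext i
      rcases h01 (s i) with h | h <;> simp [h]
  set g : ℕ → ℝ := fun k => exp ((2 * n - 1) * (p - (k : ℝ) / n) ^ 2) with hg
  set A : ℕ → Set (Fin n → Z) := fun k => {s | T s = (k : ℝ)} with hA
  have hAmeas : ∀ k, MeasurableSet (A k) := fun k =>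
    hTmeas (measurableSet_singleton ((k : ℝ)))
  have hdecomp : (fun s => exp ((2 * n - 1) * (p - (1 / n) * T s) ^ 2)) =
      fun s => ∑ k ∈ Finset.range (n + 1), (A k).indicator (fun _ => g k) s := by
    funext s
    obtain ⟨k0, hk0n, hk0⟩ := hTk s
    rw [Finset.sum_eq_single_of_mem k0 (Finset.mem_range.2 (Nat.lt_succ_of_le hk0n))]
    · have hmem : s ∈ A k0 := hk0
      rw [Set.indicator_of_mem hmem, hg]
      congr 2
      rw [hk0]
      field_simp
    · intro k _ hkne
      apply Set.indicator_of_notMem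
      simp only [hA, Set.mem_setOf_eq, hk0]
      exact_mod_cast fun h => hkne (Nat.cast_injective h).symm
  calc ∫ s, exp ((2 * n - 1) * (p - (1 / n) * T s) ^ 2) ∂μ
      = ∑ k ∈ Finset.range (n + 1), ∫ s, (A k).indicator (fun _ => g k) s ∂μ := by
        rw [hdecomp]
        exact integral_finset_sum _ fun k _ => (integrable_const (g k)).indicator (hAmeas k)
    _ = ∑ k ∈ Finset.range (n + 1), (μ (A k)).toReal * g k := by
        congr 1; funext k
        rw [integral_indicator_const _ (hAmeas k)]; simp [mul_comm, Measure.real]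
    _ ≤ ∑ k ∈ Finset.range (n + 1), (1 : ℝ) := by
        apply Finset.sum_le_sum
        intro k _
        have hcher := chernoff_point 𝒟 hX h01 n hn k
        have h1 : (μ (A k)).toReal ≤ Real.exp (-2 * n * ((k : ℝ) / n - p) ^ 2) :=
          ENNReal.toReal_le_of_le_ofReal (exp_pos _).le hcher
        have hg0 : 0 < g k := exp_pos _
        calc (μ (A k)).toReal * g k ≤ Real.exp (-2 * n * ((k : ℝ) / n - p) ^ 2) * g k :=
              mul_le_mul_of_nonneg_right h1 hg0.le
          _ = exp (-2 * n * ((k : ℝ) / n - p) ^ 2 + (2 * n - 1) * (p - (k : ℝ) / n) ^ 2) := by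
              rw [hg, ← Real.exp_add]
          _ = exp (-((p - (k : ℝ) / n) ^ 2)) := by congr 1; ring
          _ ≤ 1 := exp_le_one_iff.2 (neg_nonpos.2 (sq_nonneg _))
    _ = (n : ℝ) + 1 := by simp
    _ ≤ exp 2 * n := by nlinarith [mul_le_mul_of_nonneg_right (Real.add_one_le_exp 2) hn0.le,
        (by exact_mod_cast hn : (1:ℝ) ≤ n)]


lemma sq_integral_le {H : Type*} [MeasurableSpace H] (Q : Measure H) [IsProbabilityMeasure Q]
    {Δ : H → ℝ} (hint : Integrable Δ Q) (hint2 : Integrable (fun h => Δ h ^ 2) Q) :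
    (∫ h, Δ h ∂Q) ^ 2 ≤ ∫ h, Δ h ^ 2 ∂Q := by
  set m := ∫ h, Δ h ∂Q with hm
  have h0 : 0 ≤ ∫ h, (Δ h - m) ^ 2 ∂Q := integral_nonneg fun h => sq_nonneg _
  have hexp : ∫ h, (Δ h - m) ^ 2 ∂Q = (∫ h, Δ h ^ 2 ∂Q) - m ^ 2 := by
    have heq : (fun h => (Δ h - m) ^ 2) = fun h => Δ h ^ 2 - (2 * m) * Δ h + m ^ 2 :=
      funext fun h => by ring
    have i1 : Integrable (fun h => Δ h ^ 2 - 2 * m * Δ h) Q := hint2.sub (hint.const_mul (2 * m))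
    have i2 : Integrable (fun h => 2 * m * Δ h) Q := hint.const_mul (2 * m)
    rw [heq, integral_add i1 (integrable_const _),
      integral_sub hint2 i2, MeasureTheory.integral_const_mul,
      integral_const]
    simp [← hm]
    ring
  linarith

lemma stepC {H : Type*} [MeasurableSpace H] (P Q : Measure H)
    [IsProbabilityMeasure P] [IsProbabilityMeasure Q]
    (hQP : Q ≪ P) (hlogint : Integrable (fun h => Real.log (Q.rnDeriv P h).toReal) Q)
    {f : H → ℝ} (hf : Measurable f) (hf0 : ∀ h, 0 ≤ f h) {B : ℝ} (hfB : ∀ h, f h ≤ B)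
    {c : ℝ} (hc : ∫ h, Real.exp (f h) ∂P ≤ c) :
    ∫ h, f h ∂Q ≤ (∫ h, Real.log (Q.rnDeriv P h).toReal ∂Q) + Real.log c := by
  set g : H → ℝ := fun h => (Q.rnDeriv P h).toReal with hg
  have hgmeas : Measurable g := (Measure.measurable_rnDeriv Q P).ennreal_toReal
  have hgpos : ∀ᵐ h ∂Q, 0 < g h := by
    filter_upwards [Measure.rnDeriv_pos hQP, hQP.ae_le (Measure.rnDeriv_lt_top Q P)]
      with h h1 h2
    exact ENNReal.toReal_pos h1.ne' h2.ne
  have hefint : Integrable (fun h => exp (f h)) P :=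
    (integrable_const (exp B)).mono' (hf.exp).aestronglyMeasurable
      (Filter.Eventually.of_forall fun h => by
        rw [Real.norm_eq_abs, abs_of_pos (exp_pos _)]; exact exp_le_exp.2 (hfB h))
  have hc1 : (1 : ℝ) ≤ c := by
    refine le_trans ?_ hc
    calc (1 : ℝ) = ∫ _ : H, (1 : ℝ) ∂P := by simp
    _ ≤ ∫ h, exp (f h) ∂P := integral_mono (integrable_const 1) hefint
        fun h => one_le_exp (hf0 h)
  have hc0 : (0 : ℝ) < c := lt_of_lt_of_le one_pos hc1
  set φ : H → ℝ := fun h => exp (f h) / g h with hφ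
  have hgφ_le : ∀ h, g h * φ h ≤ exp (f h) := by
    intro h
    rcases eq_or_ne (g h) 0 with h0 | h0
    · simp [hφ, h0, (exp_pos (f h)).le]
    · have : g h * φ h = exp (f h) := by
        rw [hφ]; field_simp
      rw [this]
  have hgφ_nonneg : ∀ h, 0 ≤ g h * φ h := fun h => by
    apply mul_nonneg ENNReal.toReal_nonneg
    exact div_nonneg (exp_pos _).le ENNReal.toReal_nonneg
  have hgφint : Integrable (fun h => g h * φ h) P :=
    (integrable_const (exp B)).mono' ((hgmeas.mul ((hf.exp).div hgmeas))).aestronglyMeasurable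
      (Filter.Eventually.of_forall fun h => by
        rw [Real.norm_eq_abs, abs_of_nonneg (hgφ_nonneg h)]
        exact (hgφ_le h).trans (exp_le_exp.2 (hfB h)))
  have hφint : Integrable φ Q := by
    rw [← integrable_rnDeriv_smul_iff hQP]
    simpa [smul_eq_mul] using hgφint
  have hφQ : ∫ h, φ h ∂Q ≤ c := by
    rw [← integral_rnDeriv_smul hQP]
    simp only [smul_eq_mul]
    calc ∫ h, g h * φ h ∂P ≤ ∫ h, exp (f h) ∂P :=
          integral_mono hgφint hefint hgφ_le
    _ ≤ c := hc
  have hfint : Integrable f Q :=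
    (integrable_const B).mono' hf.aestronglyMeasurable
      (Filter.Eventually.of_forall fun h => by
        rw [Real.norm_eq_abs, abs_of_nonneg (hf0 h)]; exact hfB h)
  have hae : ∀ᵐ h ∂Q, f h - Real.log (g h) ≤ φ h / c - 1 + Real.log c := by
    filter_upwards [hgpos] with h hgh
    have hφpos : 0 < φ h := div_pos (exp_pos _) hgh
    have h1 : f h - Real.log (g h) = Real.log (φ h) := by
      rw [hφ]
      rw [Real.log_div (exp_ne_zero _) hgh.ne', Real.log_exp]
    rw [h1]
    have h2 : Real.log (φ h) - Real.log c = Real.log (φ h / c) :=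
      (Real.log_div hφpos.ne' hc0.ne').symm
    have h3 : Real.log (φ h / c) ≤ φ h / c - 1 :=
      Real.log_le_sub_one_of_pos (div_pos hφpos hc0)
    linarith
  have hint_rhs : Integrable (fun h => φ h / c - 1 + Real.log c) Q := by
    exact ((hφint.div_const c).sub (integrable_const 1)).add (integrable_const _)
  have hmain : ∫ h, (f h - Real.log (g h)) ∂Q ≤ ∫ h, (φ h / c - 1 + Real.log c) ∂Q :=
    integral_mono_ae (hfint.sub hlogint) hint_rhs hae
  rw [integral_sub hfint hlogint] at hmain
  have hrhs : ∫ h, (φ h / c - 1 + Real.log c) ∂Q ≤ Real.log c := by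
    have i1 : Integrable (fun h => φ h / c - 1) Q := (hφint.div_const c).sub (integrable_const 1)
    have i2 : Integrable (fun h => φ h / c) Q := hφint.div_const c
    rw [integral_add i1 (integrable_const _),
      integral_sub i2 (integrable_const 1), integral_div, integral_const]
    simp only [integral_const, measure_univ, ENNReal.toReal_one, probReal_univ, smul_eq_mul, one_mul]
    have : (∫ h, φ h ∂Q) / c ≤ 1 := (div_le_one hc0).2 hφQ
    linarith
  linarith

lemma final_arith {α : Type*} [MeasurableSpace α] (μ : Measure α) [IsProbabilityMeasure μ]
    {δ : ℝ} (hδ0 : 0 ≤ δ) {G T : Set α} (hsub : G ⊆ T) (hGc : μ Gᶜ ≤ ENNReal.ofReal δ) :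
    ENNReal.ofReal (1 - δ) ≤ μ T := by
  have h1 : (1 : ℝ≥0∞) ≤ μ T + ENNReal.ofReal δ := by
    calc (1 : ℝ≥0∞) = μ Set.univ := measure_univ.symm
    _ = μ (T ∪ Tᶜ) := by rw [Set.union_compl_self]
    _ ≤ μ T + μ Tᶜ := measure_union_le _ _
    _ ≤ μ T + ENNReal.ofReal δ :=
        add_le_add_right ((measure_mono (Set.compl_subset_compl.2 hsub)).trans hGc) _
  rw [ENNReal.ofReal_sub _ hδ0, ENNReal.ofReal_one]
  exact tsub_le_iff_right.2 h1

/-- **McAllester PAC-Bayes bound.** For a prior `P` on a hypothesis space `H`, a 0-1 loss `ℓ`,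
and a data distribution `𝒟`, for any `δ ∈ (0,1)` and `n ≥ 1`, with probability at least
`1 - δ` over an i.i.d. sample of size `n`, simultaneously for every posterior `Q`:
`E_{h∼Q}[R(h)] ≤ E_{h∼Q}[R̂(h)] + sqrt((KL(Q‖P) + log(n/δ) + 2) / (2n - 1))`. -/
theorem mcallester_pac_bayes_bound
    {H Z : Type*} [MeasurableSpace H] [MeasurableSpace Z]
    (P : Measure H) [IsProbabilityMeasure P]
    (𝒟 : Measure Z) [IsProbabilityMeasure 𝒟]
    (ℓ : H → Z → ℝ) (hmeas : Measurable (Function.uncurry ℓ))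
    (h01 : ∀ h z, ℓ h z = 0 ∨ ℓ h z = 1)
    (n : ℕ) (hn : 1 ≤ n) (δ : ℝ) (hδ : δ ∈ Set.Ioo (0 : ℝ) 1) :
    ENNReal.ofReal (1 - δ) ≤
      (Measure.pi fun _ : Fin n => 𝒟)
        {s : Fin n → Z | ∀ Q : Measure H, IsProbabilityMeasure Q → klDiv Q P ≠ ⊤ →
          (∫ h, (∫ z, ℓ h z ∂𝒟) ∂Q) ≤
            (∫ h, (1 / n) * ∑ i : Fin n, ℓ h (s i) ∂Q) +
              Real.sqrt (((klDiv Q P).toReal + Real.log (n / δ) + 2) / (2 * n - 1))} := by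
  obtain ⟨hδ0, hδ1⟩ := hδ
  have hn0 : (0 : ℝ) < n := by exact_mod_cast hn
  have h2n1 : (0 : ℝ) < 2 * (n : ℝ) - 1 := by
    have : (1:ℝ) ≤ n := by exact_mod_cast hn
    linarith
  have hℓ01 : ∀ h z, 0 ≤ ℓ h z ∧ ℓ h z ≤ 1 := fun h z => by
    rcases h01 h z with h' | h' <;> simp [h']
  set μ : Measure (Fin n → Z) := Measure.pi fun _ : Fin n => 𝒟 with hμdef
  haveI : IsProbabilityMeasure μ := by rw [hμdef]; exact MeasureTheory.Measure.pi.instIsProbabilityMeasure _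
  set R : H → ℝ := fun h => ∫ z, ℓ h z ∂𝒟 with hRdef
  have hRsm : StronglyMeasurable R := hmeas.stronglyMeasurable.integral_prod_right'
  have hRmeas : Measurable R := hRsm.measurable
  have hℓmeas_h : ∀ h, Measurable (fun z => ℓ h z) := fun h =>
    hmeas.comp measurable_prodMk_left
  have hℓint : ∀ h, Integrable (fun z => ℓ h z) 𝒟 := fun h =>
    (integrable_const (1:ℝ)).mono' (hℓmeas_h h).aestronglyMeasurable
      (Filter.Eventually.of_forall fun z => by
        rw [Real.norm_eq_abs, abs_of_nonneg (hℓ01 h z).1]; exact (hℓ01 h z).2)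
  have hR01 : ∀ h, 0 ≤ R h ∧ R h ≤ 1 := by
    intro h
    constructor
    · exact integral_nonneg fun z => (hℓ01 h z).1
    · calc R h ≤ ∫ _ : Z, (1:ℝ) ∂𝒟 :=
            integral_mono (hℓint h) (integrable_const 1) fun z => (hℓ01 h z).2
      _ = 1 := by simp
  set Remp : (Fin n → Z) → H → ℝ := fun s h => (1 / (n:ℝ)) * ∑ i, ℓ h (s i) with hRempdef
  have hRemp01 : ∀ s h, 0 ≤ Remp s h ∧ Remp s h ≤ 1 := by
    intro s h
    have hsum0 : 0 ≤ ∑ i, ℓ h (s i) := Finset.sum_nonneg fun i _ => (hℓ01 h (s i)).1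
    have hsum1 : ∑ i, ℓ h (s i) ≤ (n:ℝ) := by
      calc ∑ i, ℓ h (s i) ≤ ∑ _i : Fin n, (1:ℝ) :=
            Finset.sum_le_sum fun i _ => (hℓ01 h (s i)).2
      _ = (n:ℝ) := by simp
    constructor
    · exact mul_nonneg (by positivity) hsum0
    · rw [hRempdef]
      simp only
      rw [div_mul_eq_mul_div, one_mul, div_le_one hn0]
      exact hsum1
  set f : (Fin n → Z) → H → ℝ := fun s h => (2 * (n:ℝ) - 1) * (R h - Remp s h) ^ 2 with hfdef
  have hf0 : ∀ s h, 0 ≤ f s h := fun s h => mul_nonneg h2n1.le (sq_nonneg _)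
  have hfB : ∀ s h, f s h ≤ 2 * (n:ℝ) - 1 := by
    intro s h
    have h1 : (R h - Remp s h) ^ 2 ≤ 1 := by
      rw [sq_le_one_iff_abs_le_one, abs_le]
      constructor <;> [linarith [(hR01 h).1, (hRemp01 s h).2]; linarith [(hR01 h).2, (hRemp01 s h).1]]
    calc f s h ≤ (2 * (n:ℝ) - 1) * 1 := mul_le_mul_of_nonneg_left h1 h2n1.le
    _ = 2 * (n:ℝ) - 1 := mul_one _
  set Ψ : H × (Fin n → Z) → ℝ := fun q => exp (f q.2 q.1) with hΨdef
  have hΨmeas : Measurable Ψ := by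
    have m1 : Measurable fun q : H × (Fin n → Z) => R q.1 := hRmeas.comp measurable_fst
    have m2 : Measurable fun q : H × (Fin n → Z) => ∑ i, ℓ q.1 (q.2 i) :=
      Finset.measurable_sum _ fun i _ =>
        hmeas.comp (measurable_fst.prodMk ((measurable_pi_apply i).comp measurable_snd))
    exact ((((m1.sub (m2.const_mul (1 / (n:ℝ)))).pow_const 2).const_mul
      (2 * (n:ℝ) - 1)).exp).comp measurable_id |>.mono le_rfl le_rfl |>.comp measurable_id
  set F : (Fin n → Z) → ℝ := fun s => ∫ h, exp (f s h) ∂P with hFdef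
  have hFsm : StronglyMeasurable F := hΨmeas.stronglyMeasurable.integral_prod_left'
  have hFnonneg : ∀ s, 0 ≤ F s := fun s => integral_nonneg fun h => (exp_pos _).le
  set C : ℝ := exp (2 * (n:ℝ) - 1) with hCdef
  have hΨle : ∀ q : H × (Fin n → Z), Ψ q ≤ C := fun q => exp_le_exp.2 (hfB q.2 q.1)
  have hΨpos : ∀ q : H × (Fin n → Z), 0 < Ψ q := fun q => exp_pos _
  have hefint : ∀ s, Integrable (fun h => exp (f s h)) P := by
    intro s
    refine (integrable_const C).mono' ?_ (Filter.Eventually.of_forall fun h => ?_)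
    · exact (hΨmeas.comp (measurable_id.prodMk measurable_const)).aestronglyMeasurable
    · rw [Real.norm_eq_abs, abs_of_pos (exp_pos _)]
      exact hΨle (h, s)
  have hFle : ∀ s, F s ≤ C := by
    intro s
    calc F s ≤ ∫ _ : H, C ∂P := integral_mono (hefint s) (integrable_const C)
          fun h => hΨle (h, s)
    _ = C := by simp
  have hFint : Integrable F μ :=
    (integrable_const C).mono' hFsm.aestronglyMeasurable
      (Filter.Eventually.of_forall fun s => by
        rw [Real.norm_eq_abs, abs_of_nonneg (hFnonneg s)]; exact hFle s)
  -- Fubini and Step A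
  have hΨint : Integrable Ψ (P.prod μ) :=
    (integrable_const C).mono' hΨmeas.aestronglyMeasurable
      (Filter.Eventually.of_forall fun q => by
        rw [Real.norm_eq_abs, abs_of_pos (hΨpos q)]; exact hΨle q)
  have hswap : ∫ h, (∫ s, exp (f s h) ∂μ) ∂P = ∫ s, F s ∂μ :=
    integral_integral_swap (f := fun h s => exp (f s h)) hΨint
  have hinner_bound : ∀ h, ∫ s, exp (f s h) ∂μ ≤ exp 2 * n := by
    intro h
    have := stepA 𝒟 (hℓmeas_h h) (h01 h) n hn
    simpa [hfdef, hRdef, hRempdef, hμdef] using this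
  have hinner_int : Integrable (fun h => ∫ s, exp (f s h) ∂μ) P := by
    have hm : StronglyMeasurable (fun h => ∫ s, Ψ (h, s) ∂μ) :=
      hΨmeas.stronglyMeasurable.integral_prod_right'
    refine (integrable_const (exp 2 * n)).mono' hm.aestronglyMeasurable
      (Filter.Eventually.of_forall fun h => ?_)
    rw [Real.norm_eq_abs, abs_of_nonneg (integral_nonneg fun s => (exp_pos _).le)]
    exact hinner_bound h
  have hintF : ∫ s, F s ∂μ ≤ exp 2 * n := by
    rw [← hswap]
    calc ∫ h, (∫ s, exp (f s h) ∂μ) ∂P ≤ ∫ _ : H, exp 2 * n ∂P :=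
          integral_mono hinner_int (integrable_const _) hinner_bound
    _ = exp 2 * n := by simp
  -- Markov
  set ε : ℝ := exp 2 * n / δ with hεdef
  have hε0 : 0 < ε := div_pos (mul_pos (exp_pos 2) hn0) hδ0
  have hmarkov := mul_meas_ge_le_integral_of_nonneg (μ := μ)
    (Filter.Eventually.of_forall hFnonneg) hFint ε
  have hbad : μ {s | ε ≤ F s} ≤ ENNReal.ofReal δ := by
    rw [ENNReal.le_ofReal_iff_toReal_le (measure_ne_top _ _) hδ0.le]
    have h1 : ε * (μ {s | ε ≤ F s}).toReal ≤ exp 2 * n := hmarkov.trans hintF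
    have h2 : (μ {s | ε ≤ F s}).toReal ≤ (exp 2 * n) / ε := by
      rw [le_div_iff₀ hε0, mul_comm]
      exact h1
    refine h2.trans (le_of_eq ?_)
    rw [hεdef]
    field_simp
  -- inclusion and conclusion
  refine final_arith μ hδ0.le (G := {s : Fin n → Z | F s ≤ ε}) ?_ ?_
  · intro s hs
    simp only [Set.mem_setOf_eq] at hs ⊢
    intro Q hQprob hQtop
    haveI := hQprob
    have hcond : Q ≪ P ∧ Integrable (fun x => Real.log (Q.rnDeriv P x).toReal) Q := by
      by_contra hcon
      exact hQtop (by rw [klDiv, if_neg hcon])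
    obtain ⟨hQP, hlogint⟩ := hcond
    have hKL : (klDiv Q P).toReal = ∫ x, Real.log (Q.rnDeriv P x).toReal ∂Q := by
      rw [klDiv, if_pos ⟨hQP, hlogint⟩]
      exact EReal.toReal_coe _
    have hfmeas_s : Measurable (fun h => f s h) := by
      simp only [hfdef, hRempdef]
      exact ((hRmeas.sub ((Finset.measurable_sum _ fun i _ =>
        hmeas.comp (measurable_id.prodMk measurable_const)).const_mul _)).pow_const 2).const_mul _
    have hDV := stepC P Q hQP hlogint hfmeas_s (hf0 s) (hfB s) (c := ε) hs
    have hlogε : Real.log ε = 2 + Real.log ((n:ℝ) / δ) := by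
      rw [hεdef, mul_div_assoc, Real.log_mul (exp_ne_zero 2) (ne_of_gt (div_pos hn0 hδ0)),
        Real.log_exp]
    have hΔmeas : Measurable (fun h => R h - Remp s h) := by
      apply hRmeas.sub
      simp only [hRempdef]
      exact (Finset.measurable_sum _ fun i _ =>
        hmeas.comp (measurable_id.prodMk measurable_const)).const_mul _
    have hΔbd : ∀ h, |R h - Remp s h| ≤ 1 := by
      intro h
      rw [abs_le]
      constructor <;> [linarith [(hR01 h).1, (hRemp01 s h).2]; linarith [(hR01 h).2, (hRemp01 s h).1]]
    have hΔint : Integrable (fun h => R h - Remp s h) Q :=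
      (integrable_const (1:ℝ)).mono' hΔmeas.aestronglyMeasurable
        (Filter.Eventually.of_forall fun h => by rw [Real.norm_eq_abs]; exact hΔbd h)
    have hΔ2int : Integrable (fun h => (R h - Remp s h) ^ 2) Q :=
      (integrable_const (1:ℝ)).mono' ((hΔmeas.pow_const 2).aestronglyMeasurable)
        (Filter.Eventually.of_forall fun h => by
          rw [Real.norm_eq_abs, abs_of_nonneg (sq_nonneg _), sq_le_one_iff_abs_le_one]
          exact hΔbd h)
    have hfQ : ∫ h, f s h ∂Q = (2 * (n:ℝ) - 1) * ∫ h, (R h - Remp s h) ^ 2 ∂Q := by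
      rw [hfdef]
      exact MeasureTheory.integral_const_mul _ _
    set V : ℝ := (klDiv Q P).toReal + Real.log ((n:ℝ) / δ) + 2 with hVdef
    have hmain : (2 * (n:ℝ) - 1) * ∫ h, (R h - Remp s h) ^ 2 ∂Q ≤ V := by
      rw [← hfQ]
      calc ∫ h, f s h ∂Q ≤ (∫ h, Real.log (Q.rnDeriv P h).toReal ∂Q) + Real.log ε := hDV
      _ = V := by rw [hlogε, hVdef, hKL]; ring
    have hsqle : ∫ h, (R h - Remp s h) ^ 2 ∂Q ≤ V / (2 * (n:ℝ) - 1) := by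
      rw [le_div_iff₀ h2n1, mul_comm]
      exact hmain
    have hm2 := sq_integral_le Q hΔint hΔ2int
    have habs : ∫ h, (R h - Remp s h) ∂Q ≤ Real.sqrt (V / (2 * (n:ℝ) - 1)) := by
      calc ∫ h, (R h - Remp s h) ∂Q ≤ |∫ h, (R h - Remp s h) ∂Q| := le_abs_self _
      _ = Real.sqrt ((∫ h, (R h - Remp s h) ∂Q) ^ 2) := (Real.sqrt_sq_eq_abs _).symm
      _ ≤ Real.sqrt (V / (2 * (n:ℝ) - 1)) := Real.sqrt_le_sqrt (hm2.trans hsqle)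
    have hRint : Integrable R Q :=
      (integrable_const (1:ℝ)).mono' hRsm.aestronglyMeasurable
        (Filter.Eventually.of_forall fun h => by
          rw [Real.norm_eq_abs, abs_of_nonneg (hR01 h).1]; exact (hR01 h).2)
    have hRempint : Integrable (fun h => Remp s h) Q := by
      have hmm : Measurable (fun h => Remp s h) := by
        simp only [hRempdef]
        exact (Finset.measurable_sum _ fun i _ =>
          hmeas.comp (measurable_id.prodMk measurable_const)).const_mul _
      exact (integrable_const (1:ℝ)).mono' hmm.aestronglyMeasurable
        (Filter.Eventually.of_forall fun h => by
          rw [Real.norm_eq_abs, abs_of_nonneg (hRemp01 s h).1]; exact (hRemp01 s h).2)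
    have hsplit : ∫ h, (R h - Remp s h) ∂Q = (∫ h, R h ∂Q) - ∫ h, Remp s h ∂Q :=
      integral_sub hRint hRempint
    rw [hsplit] at habs
    show (∫ h, R h ∂Q) ≤ (∫ h, Remp s h ∂Q) + Real.sqrt (V / (2 * (n:ℝ) - 1))
    linarith
  · refine (measure_mono ?_).trans hbad
    intro s hsc
    simp only [Set.mem_compl_iff, Set.mem_setOf_eq, not_le] at hsc
    exact Set.mem_setOf_eq ▸ hsc.le
end

section
/- Kraft inequality converse (existence of prefix codes): Let I be a countable set and ℓ : I → ℕ a function satisfying Σ_{i ∈ I} 2^{−ℓ(i)} ≤ 1. Then there exists an injective map c from I into the set of finite binary strings such that the image of c is prefix-free and |c(i)| = ℓ(i) for every i ∈ I. -/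
open scoped ENNReal

/-- A set of finite binary strings is prefix-free if no element is a proper prefix of
another element. -/
def PrefixFree (S : Set (List Bool)) : Prop :=
  ∀ s ∈ S, ∀ t ∈ S, s <+: t → s = t

namespace KraftAux

/-- The binary word of length `L` consisting of bits `L-1, …, 0` of `n` (MSB first). -/
def word : ℕ → ℕ → List Bool
  | 0, _ => []
  | L + 1, n => n.testBit L :: word L n

lemma word_length (L n : ℕ) : (word L n).length = L := by
  induction L with
  | zero => rfl
  | succ L ih => simp [word, ih]

lemma word_testBit : ∀ L n m, word L n = word L m → ∀ k, k < L → n.testBit k = m.testBit k := by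
  intro L
  induction L with
  | zero => intro n m _ k hk; omega
  | succ L ih =>
    intro n m h k hk
    simp only [word, List.cons.injEq] at h
    rcases Nat.lt_succ_iff_lt_or_eq.mp hk with h' | h'
    · exact ih n m h.2 k h'
    · subst h'; exact h.1

lemma word_inj {L n m : ℕ} (hn : n < 2 ^ L) (hm : m < 2 ^ L)
    (h : word L n = word L m) : n = m := by
  apply Nat.eq_of_testBit_eq
  intro k
  by_cases hk : k < L
  · exact word_testBit L n m h k hk
  · have hL : 2 ^ L ≤ 2 ^ k := Nat.pow_le_pow_right (by norm_num) (by omega)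
    rw [Nat.testBit_eq_false_of_lt (lt_of_lt_of_le hn hL),
        Nat.testBit_eq_false_of_lt (lt_of_lt_of_le hm hL)]

lemma word_take : ∀ M L, L ≤ M → ∀ m, (word M m).take L = word L (m / 2 ^ (M - L)) := by
  intro M
  induction M with
  | zero => intro L hL m; interval_cases L; simp [word]
  | succ M ih =>
    intro L hL m
    cases L with
    | zero => simp [word]
    | succ L =>
      have hL' : L ≤ M := by omega
      have hML : M + 1 - (L + 1) = M - L := by omega
      simp only [word, List.take_succ_cons, hML]
      rw [ih L hL' m]
      congr 1
      rw [← Nat.shiftRight_eq_div_pow, Nat.testBit_shiftRight]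
      congr 1
      omega

end KraftAux

open KraftAux in
/-- **Kraft inequality converse (existence of prefix codes).** If `I` is a countable set and
`ℓ : I → ℕ` satisfies `Σ_{i ∈ I} 2^{-ℓ i} ≤ 1`, then there is an injective map `c` from `I`
into finite binary strings whose image is prefix-free and with `|c i| = ℓ i` for all `i`. -/
theorem kraft_inequality_converse
    {I : Type*} [Countable I] (ℓ : I → ℕ)
    (hkraft : ∑' i : I, (2 : ℝ≥0∞) ^ (-(ℓ i : ℤ)) ≤ 1) :
    ∃ c : I → List Bool, Function.Injective c ∧ PrefixFree (Set.range c) ∧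
      ∀ i, (c i).length = ℓ i := by
  classical
  obtain ⟨e, he⟩ := Countable.exists_injective_nat I
  set rel : I → I → Prop := fun j i => ℓ j < ℓ i ∨ (ℓ j = ℓ i ∧ e j < e i) with hrel
  -- finitely many indices with bounded length
  have hfinL : ∀ L : ℕ, {j : I | ℓ j ≤ L}.Finite := by
    intro L
    by_contra hinf
    obtain ⟨F, hFsub, hFcard⟩ :=
      Set.Infinite.exists_subset_card_eq hinf (2 ^ L + 1)
    have hsum1 : ∑ j ∈ F, (2 : ℝ≥0∞) ^ (-(ℓ j : ℤ)) ≤ 1 :=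
      le_trans (ENNReal.sum_le_tsum F) hkraft
    have hsum2 : (F.card) • (2 : ℝ≥0∞) ^ (-(L : ℤ)) ≤ ∑ j ∈ F, (2 : ℝ≥0∞) ^ (-(ℓ j : ℤ)) := by
      apply Finset.card_nsmul_le_sum
      intro j hj
      have hjL : ℓ j ≤ L := hFsub hj
      exact ENNReal.zpow_le_of_le (by norm_num) (by omega)
    rw [hFcard, nsmul_eq_mul] at hsum2
    have hkey : ((2 ^ L + 1 : ℕ) : ℝ≥0∞) * (2 : ℝ≥0∞) ^ (-(L : ℤ)) ≤ 1 := le_trans hsum2 hsum1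
    have hexp : ((2 ^ L + 1 : ℕ) : ℝ≥0∞) * (2 : ℝ≥0∞) ^ (-(L : ℤ))
        = 1 + (2 : ℝ≥0∞) ^ (-(L : ℤ)) := by
      push_cast
      rw [add_mul, one_mul, ← zpow_natCast (2 : ℝ≥0∞) L,
        ← ENNReal.zpow_add (by norm_num) (by norm_num)]
      simp
    rw [hexp] at hkey
    have hpos : (0 : ℝ≥0∞) < (2 : ℝ≥0∞) ^ (-(L : ℤ)) :=
      ENNReal.zpow_pos (by norm_num) (by norm_num) _
    have : (1 : ℝ≥0∞) < 1 + (2 : ℝ≥0∞) ^ (-(L : ℤ)) :=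
      ENNReal.lt_add_right ENNReal.one_ne_top hpos.ne'
    exact absurd (lt_of_lt_of_le this hkey) (lt_irrefl _)
  have hrel_le : ∀ {j i : I}, rel j i → ℓ j ≤ ℓ i := by
    intro j i h; rcases h with h | ⟨h, _⟩ <;> omega
  have hfin : ∀ i : I, {j : I | rel j i}.Finite := by
    intro i
    apply (hfinL (ℓ i)).subset
    intro j hj
    exact hrel_le hj
  have hirr : ∀ i : I, ¬ rel i i := by
    intro i h; rcases h with h | ⟨_, h⟩ <;> omega
  have htrans : ∀ {k j i : I}, rel k j → rel j i → rel k i := by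
    intro k j i h1 h2
    rcases h1 with h1 | ⟨h1, h1'⟩ <;> rcases h2 with h2 | ⟨h2, h2'⟩
    · exact Or.inl (by omega)
    · exact Or.inl (by omega)
    · exact Or.inl (by omega)
    · exact Or.inr ⟨by omega, by omega⟩
  have htricho : ∀ {i j : I}, i ≠ j → rel i j ∨ rel j i := by
    intro i j hne
    rcases lt_trichotomy (ℓ i) (ℓ j) with h | h | h
    · exact Or.inl (Or.inl h)
    · rcases lt_trichotomy (e i) (e j) with h' | h' | h'
      · exact Or.inl (Or.inr ⟨h, h'⟩)
      · exact absurd (he h') hne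
      · exact Or.inr (Or.inr ⟨h.symm, h'⟩)
    · exact Or.inr (Or.inl h)
  set N : I → ℕ := fun i => ∑ j ∈ (hfin i).toFinset, 2 ^ (ℓ i - ℓ j) with hN
  -- casting lemma
  have hterm : ∀ a b : ℕ, a ≤ b →
      (2 : ℝ≥0∞) ^ (-(a : ℤ)) * 2 ^ b = ((2 ^ (b - a) : ℕ) : ℝ≥0∞) := by
    intro a b hab
    push_cast
    rw [← zpow_natCast (2 : ℝ≥0∞) b, ← zpow_natCast (2 : ℝ≥0∞) (b - a),
      ← ENNReal.zpow_add (by norm_num) (by norm_num)]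
    congr 1
    omega
  -- key bound : N i + 1 ≤ 2 ^ ℓ i
  have hNS : ∀ i : I, N i + 1 ≤ 2 ^ ℓ i := by
    intro i
    have hnotmem : i ∉ (hfin i).toFinset := by simp [hirr i]
    have hsum1 : ∑ j ∈ insert i (hfin i).toFinset, (2 : ℝ≥0∞) ^ (-(ℓ j : ℤ)) ≤ 1 :=
      le_trans (ENNReal.sum_le_tsum _) hkraft
    have hsum2 := mul_le_mul_left hsum1 ((2 : ℝ≥0∞) ^ ℓ i)
    rw [one_mul, Finset.sum_mul] at hsum2
    have hre : ∀ j ∈ insert i (hfin i).toFinset,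
        (2 : ℝ≥0∞) ^ (-(ℓ j : ℤ)) * 2 ^ ℓ i = ((2 ^ (ℓ i - ℓ j) : ℕ) : ℝ≥0∞) := by
      intro j hj
      apply hterm
      rcases Finset.mem_insert.mp hj with h | h
      · exact le_of_eq (by rw [h])
      · exact hrel_le ((hfin i).mem_toFinset.mp h)
    rw [Finset.sum_congr rfl hre, ← Nat.cast_sum] at hsum2
    have hsum3 : (∑ j ∈ insert i (hfin i).toFinset, 2 ^ (ℓ i - ℓ j)) ≤ 2 ^ ℓ i := by
      have h2 : ((2 ^ ℓ i : ℕ) : ℝ≥0∞) = (2 : ℝ≥0∞) ^ ℓ i := by push_cast; rfl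
      rw [← h2] at hsum2
      exact_mod_cast hsum2
    rw [Finset.sum_insert hnotmem] at hsum3
    simpa [hN, Nat.sub_self, add_comm] using hsum3
  -- monotonicity
  have hmono : ∀ {j i : I}, rel j i → (N j + 1) * 2 ^ (ℓ i - ℓ j) ≤ N i := by
    intro j i hji
    have hsub : insert j (hfin j).toFinset ⊆ (hfin i).toFinset := by
      intro k hk
      rcases Finset.mem_insert.mp hk with h | h
      · subst h; exact (hfin i).mem_toFinset.mpr hji
      · exact (hfin i).mem_toFinset.mpr (htrans ((hfin j).mem_toFinset.mp h) hji)
    have h1 : ∑ k ∈ insert j (hfin j).toFinset, 2 ^ (ℓ i - ℓ k) ≤ N i :=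
      Finset.sum_le_sum_of_subset hsub
    have hnotmem : j ∉ (hfin j).toFinset := by simp [hirr j]
    rw [Finset.sum_insert hnotmem] at h1
    have h2 : ∑ k ∈ (hfin j).toFinset, 2 ^ (ℓ i - ℓ k)
        = N j * 2 ^ (ℓ i - ℓ j) := by
      rw [hN, Finset.sum_mul]
      apply Finset.sum_congr rfl
      intro k hk
      have hkj : ℓ k ≤ ℓ j := hrel_le ((hfin j).mem_toFinset.mp hk)
      have hji' : ℓ j ≤ ℓ i := hrel_le hji
      rw [← pow_add]
      congr 1
      omega
    rw [h2] at h1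
    have : ℓ i - ℓ j ≤ ℓ i := by omega
    nlinarith [h1]
  -- the code
  set c : I → List Bool := fun i => word (ℓ i) (N i) with hc
  have hkey : ∀ i j : I, c i <+: c j → i = j := by
    intro i j h
    have hlen : ℓ i ≤ ℓ j := by
      have := h.length_le
      simpa [hc, word_length] using this
    have htake : c i = (c j).take (ℓ i) := by
      obtain ⟨t, ht⟩ := h
      rw [← ht]
      have : List.take (c i).length (c i ++ t) = c i := List.take_left
      rw [show (c i).length = ℓ i from word_length _ _] at this
      exact this.symm
    have heq : word (ℓ i) (N i) = word (ℓ i) (N j / 2 ^ (ℓ j - ℓ i)) := by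
      rw [hc] at htake
      simpa [word_take (ℓ j) (ℓ i) hlen (N j)] using htake
    have hNi : N i < 2 ^ ℓ i := by have := hNS i; omega
    have hNj : N j < 2 ^ ℓ j := by have := hNS j; omega
    have hdiv : N j / 2 ^ (ℓ j - ℓ i) < 2 ^ ℓ i := by
      rw [Nat.div_lt_iff_lt_mul (Nat.pow_pos (by norm_num)), ← pow_add]
      calc N j < 2 ^ ℓ j := hNj
        _ ≤ 2 ^ (ℓ i + (ℓ j - ℓ i)) := by apply Nat.pow_le_pow_right <;> omega
    have hNval : N i = N j / 2 ^ (ℓ j - ℓ i) := word_inj hNi hdiv heq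
    by_contra hne
    rcases htricho hne with hij | hji
    · have h1 := hmono hij
      have h2 : N i + 1 ≤ N j / 2 ^ (ℓ j - ℓ i) :=
        (Nat.le_div_iff_mul_le (Nat.pow_pos (by norm_num))).mpr h1
      omega
    · have hle : ℓ j ≤ ℓ i := hrel_le hji
      have hLeq : ℓ i = ℓ j := le_antisymm hlen hle
      have h1 := hmono hji
      rw [show ℓ i - ℓ j = 0 by omega, pow_zero, mul_one] at h1
      rw [show ℓ j - ℓ i = 0 by omega, pow_zero, Nat.div_one] at hNval
      omega
  refine ⟨c, ?_, ?_, fun i => word_length _ _⟩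
  · intro i j h
    exact hkey i j (h ▸ List.prefix_rfl)
  · rintro s ⟨i, rfl⟩ t ⟨j, rfl⟩ h
    rw [hkey i j h]
end
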